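/- arXiv:2507.03717 — 2 statements merged into one kernel-verified Lean document; each statement's English description precedes it below -/
import Mathlib

section
/- Let k : ℝ × ℝ → ℝ be continuous and bounded, continuously differentiable in its first variable with T·∂_T k bounded. For T > 0 and Y ∈ ℝ define k̃(T,Y) = ∫_{1}^{∞} k(Tσ, Y) σ^{-2} dσ. Then k̃ is well-defined, differentiable in T, and satisfies (T·∂_T − 1) k̃ = −k, i.e. T·∂_T k̃(T,Y) − k̃(T,Y) = −k(T,Y). -/
open Real Set

/-- Partial derivative in the first variable. -/
noncomputable def pdx (f : ℝ × ℝ → ℝ) (p : ℝ × ℝ) : ℝ := deriv (fun x => f (x, p.2)) p.1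

/-- Partial derivative in the second variable. -/
noncomputable def pdy (f : ℝ × ℝ → ℝ) (p : ℝ × ℝ) : ℝ := deriv (fun y => f (p.1, y)) p.2

/-- Laplacian ∂²/∂x² + ∂²/∂y². -/
noncomputable def lap (f : ℝ × ℝ → ℝ) (p : ℝ × ℝ) : ℝ := pdx (pdx f) p + pdy (pdy f) p

/-- The transform k̃(T,Y) = ∫₁^∞ k(Tσ,Y) σ⁻² dσ. -/
noncomputable def ktilde (k : ℝ × ℝ → ℝ) (T Y : ℝ) : ℝ :=
  ∫ σ in Set.Ioi (1 : ℝ), k (T * σ, Y) / σ ^ 2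

/-- Integrability of a bounded continuous function divided by `s^2` on `Ioi a`, `a > 0`. -/
lemma integrableOn_div_sq {f : ℝ → ℝ} (hf : Continuous f) {M : ℝ} (hM : ∀ s, |f s| ≤ M)
    {a : ℝ} (ha : 0 < a) :
    MeasureTheory.IntegrableOn (fun s => f s / s ^ 2) (Set.Ioi a) := by
  have hint : MeasureTheory.IntegrableOn (fun s : ℝ => M * s ^ (-2 : ℝ)) (Set.Ioi a) :=
    (integrableOn_Ioi_rpow_of_lt (by norm_num) ha).const_mul M
  apply MeasureTheory.Integrable.mono' hint
  · apply ContinuousOn.aestronglyMeasurable _ measurableSet_Ioi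
    apply (hf.continuousOn).div (continuous_pow 2).continuousOn
    intro s hs
    exact pow_ne_zero 2 (ne_of_gt (lt_trans ha hs))
  · filter_upwards [MeasureTheory.ae_restrict_mem measurableSet_Ioi] with s hs
    have hs0 : 0 < s := lt_trans ha hs
    have h2 : s ^ (-2 : ℝ) = (s ^ 2)⁻¹ := by
      rw [Real.rpow_neg hs0.le]
      norm_num [Real.rpow_natCast]
    rw [Real.norm_eq_abs, abs_div, abs_of_nonneg (by positivity : (0:ℝ) ≤ s ^ 2), h2, div_eq_mul_inv]
    gcongr
    exact hM s

/-- k̃ is well defined, differentiable in T, and (T∂_T − 1)k̃ = −k. -/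
theorem right_inverse_of_D_minus_one (k : ℝ × ℝ → ℝ)
    (hk : Continuous k) (hbd : ∃ M, ∀ p, |k p| ≤ M)
    (hdiff : ∀ Y, Differentiable ℝ (fun t => k (t, Y)))
    (hdbd : ∃ M, ∀ T Y : ℝ, |T * deriv (fun t => k (t, Y)) T| ≤ M) :
    ∀ T : ℝ, 0 < T → ∀ Y : ℝ,
      MeasureTheory.IntegrableOn (fun σ => k (T * σ, Y) / σ ^ 2) (Set.Ioi (1 : ℝ)) ∧
      DifferentiableAt ℝ (fun t => ktilde k t Y) T ∧
      T * deriv (fun t => ktilde k t Y) T - ktilde k T Y = -k (T, Y) := by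
  obtain ⟨M, hM⟩ := hbd
  intro T hT Y
  -- the one-variable function
  set g : ℝ → ℝ := fun s => k (s, Y) / s ^ 2 with hg
  have hgc : Continuous fun s => k (s, Y) := hk.comp (continuous_id.prodMk continuous_const)
  have hgint : ∀ a : ℝ, 0 < a → MeasureTheory.IntegrableOn g (Set.Ioi a) := fun a ha =>
    integrableOn_div_sq hgc (fun s => hM _) ha
  -- integrability of the ktilde integrand for any t > 0
  have hint : ∀ t : ℝ, 0 < t →
      MeasureTheory.IntegrableOn (fun σ => k (t * σ, Y) / σ ^ 2) (Set.Ioi (1 : ℝ)) := by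
    intro t ht
    exact integrableOn_div_sq (hk.comp ((continuous_const.mul continuous_id).prodMk
      continuous_const)) (fun s => hM _) one_pos
  refine ⟨hint T hT, ?_⟩
  -- substitution identity: ktilde k t Y = t * ∫ s in Ioi t, g s, for t > 0
  have hsub : ∀ t : ℝ, 0 < t → ktilde k t Y = t * ∫ s in Set.Ioi t, g s := by
    intro t ht
    have h1 : ∀ σ ∈ Set.Ioi (1 : ℝ), k (t * σ, Y) / σ ^ 2 = t ^ 2 * g (t * σ) := by
      intro σ hσ
      have hσ0 : (0:ℝ) < σ := lt_trans one_pos hσ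
      simp only [hg]
      field_simp
    have h2 : ktilde k t Y = ∫ σ in Set.Ioi (1 : ℝ), t ^ 2 * g (t * σ) :=
      MeasureTheory.setIntegral_congr_fun measurableSet_Ioi h1
    rw [ktilde] at *
    rw [h2, MeasureTheory.integral_const_mul,
      MeasureTheory.integral_comp_mul_left_Ioi g 1 ht, mul_one, smul_eq_mul]
    field_simp
    -- done
  set F : ℝ → ℝ := fun t => ∫ s in Set.Ioi t, g s with hF
  -- F has derivative -g T at T, via splitting at a = T/2
  set a : ℝ := T / 2 with hA
  have ha : 0 < a := by positivity
  have haT : a < T := by simp [hA]; linarith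
  -- for t > a : F t = F a - ∫ a..t g
  have hsplit : ∀ t : ℝ, a < t → F t = F a - ∫ s in a..t, g s := by
    intro t hat
    have hd : Disjoint (Set.Ioc a t) (Set.Ioi t) := by
      rw [Set.disjoint_left]; intro x hx hx'
      exact absurd hx.2 (not_le.mpr hx')
    have hu : Set.Ioc a t ∪ Set.Ioi t = Set.Ioi a := Set.Ioc_union_Ioi_eq_Ioi hat.le
    have := MeasureTheory.setIntegral_union hd measurableSet_Ioi
      ((hgint a ha).mono_set (by rw [← hu]; exact Set.subset_union_left))
      ((hgint a ha).mono_set (by rw [← hu]; exact Set.subset_union_right)) (f := g)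
    rw [hu] at this
    rw [intervalIntegral.integral_of_le hat.le, hF]
    simp only at this ⊢
    rw [this]
    ring
  have hIi : IntervalIntegrable g MeasureTheory.volume a T := by
    rw [intervalIntegrable_iff_integrableOn_Ioc_of_le haT.le]
    exact (hgint a ha).mono_set (Set.Ioc_subset_Ioi_self)
  have hgcont : ContinuousAt g T := by
    apply ContinuousAt.div (hgc.continuousAt) ((continuous_pow 2).continuousAt)
    positivity
  have hFd : HasDerivAt F (-g T) T := by
    have hmeas : StronglyMeasurableAtFilter g (nhds T) MeasureTheory.volume := by
      refine ⟨Set.Ioi 0, Ioi_mem_nhds hT, ?_⟩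
      apply ContinuousOn.aestronglyMeasurable _ measurableSet_Ioi
      apply hgc.continuousOn.div (continuous_pow 2).continuousOn
      intro s hs
      exact pow_ne_zero 2 (ne_of_gt hs)
    have h0 : HasDerivAt (fun t => F a - ∫ s in a..t, g s) (-g T) T :=
      (intervalIntegral.integral_hasDerivAt_right hIi hmeas hgcont).const_sub (F a)
    apply h0.congr_of_eventuallyEq
    filter_upwards [eventually_gt_nhds haT] with t ht using hsplit t ht
  -- ktilde equals t * F t near T
  have hkF : HasDerivAt (fun t => ktilde k t Y) (F T + T * (-g T)) T := by
    have h0 : HasDerivAt (fun t => t * F t) (1 * F T + T * (-g T)) T :=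
      (hasDerivAt_id T).mul hFd
    rw [one_mul] at h0
    apply h0.congr_of_eventuallyEq
    filter_upwards [eventually_gt_nhds hT] with t ht using hsub t ht
  refine ⟨hkF.differentiableAt, ?_⟩
  rw [hkF.deriv, hsub T hT]
  have hT2 : T ^ 2 ≠ 0 := by positivity
  have : T * g T = k (T, Y) / T := by
    rw [hg]; field_simp
  calc T * (F T + T * (-g T)) - T * F T = -(T * (T * g T)) := by ring
    _ = -k (T, Y) := by rw [this]; field_simp
end

section
/- Let h : ℝ² → ℝ be three times continuously differentiable on {T > 0} and suppose Δh + k̃ = 0 where Δ = ∂²_T + ∂²_Y, and (D−1)k̃ = −k with D = T∂_T. Define w₁ = T^{-2}(D−1)h. Then L₀ w₁ = k, where L₀ = (D+2)(D−1) + T²∂²_Y. -/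
set_option maxHeartbeats 1000000

open Real Set

/-- Euler operator D = T·∂_T in the (T,Y) variables. -/
noncomputable def Dop (f : ℝ × ℝ → ℝ) (p : ℝ × ℝ) : ℝ := p.1 * pdx f p

private lemma hasDerivAt_slice1 {G : Type*} [NormedAddCommGroup G] [NormedSpace ℝ G]
    {f : ℝ × ℝ → G} {p : ℝ × ℝ} (hf : DifferentiableAt ℝ f p) :
    HasDerivAt (fun x => f (x, p.2)) (fderiv ℝ f p (1, 0)) p.1 := by
  have h0 : HasFDerivAt (fun x : ℝ => (x, p.2)) (ContinuousLinearMap.inl ℝ ℝ ℝ) p.1 :=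
    hasFDerivAt_prodMk_left _ _
  have h1 : HasFDerivAt (fun x : ℝ => f (x, p.2))
      ((fderiv ℝ f p).comp (ContinuousLinearMap.inl ℝ ℝ ℝ)) p.1 :=
    hf.hasFDerivAt.comp p.1 h0
  simpa using h1.hasDerivAt

private lemma hasDerivAt_slice2 {G : Type*} [NormedAddCommGroup G] [NormedSpace ℝ G]
    {f : ℝ × ℝ → G} {p : ℝ × ℝ} (hf : DifferentiableAt ℝ f p) :
    HasDerivAt (fun y => f (p.1, y)) (fderiv ℝ f p (0, 1)) p.2 := by
  have h0 : HasFDerivAt (fun y : ℝ => (p.1, y)) (ContinuousLinearMap.inr ℝ ℝ ℝ) p.2 :=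
    hasFDerivAt_prodMk_right _ _
  have h1 : HasFDerivAt (fun y : ℝ => f (p.1, y))
      ((fderiv ℝ f p).comp (ContinuousLinearMap.inr ℝ ℝ ℝ)) p.2 :=
    hf.hasFDerivAt.comp p.2 h0
  simpa using h1.hasDerivAt

private lemma hasDerivAt_slice1_clm {G : Type*} [NormedAddCommGroup G] [NormedSpace ℝ G]
    {F : ℝ × ℝ → (ℝ × ℝ) →L[ℝ] G} {p : ℝ × ℝ} (hF : DifferentiableAt ℝ F p) (v : ℝ × ℝ) :
    HasDerivAt (fun x => F (x, p.2) v) (fderiv ℝ F p (1, 0) v) p.1 := by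
  simpa using (hasDerivAt_slice1 hF).clm_apply (hasDerivAt_const p.1 v)

private lemma hasDerivAt_slice2_clm {G : Type*} [NormedAddCommGroup G] [NormedSpace ℝ G]
    {F : ℝ × ℝ → (ℝ × ℝ) →L[ℝ] G} {p : ℝ × ℝ} (hF : DifferentiableAt ℝ F p) (v : ℝ × ℝ) :
    HasDerivAt (fun y => F (p.1, y) v) (fderiv ℝ F p (0, 1) v) p.2 := by
  simpa using (hasDerivAt_slice2 hF).clm_apply (hasDerivAt_const p.2 v)

private lemma hasDerivAt_slice1_clm2
    {F : ℝ × ℝ → (ℝ × ℝ) →L[ℝ] ((ℝ × ℝ) →L[ℝ] ℝ)} {p : ℝ × ℝ}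
    (hF : DifferentiableAt ℝ F p) (u v : ℝ × ℝ) :
    HasDerivAt (fun x => F (x, p.2) u v) (fderiv ℝ F p (1, 0) u v) p.1 := by
  simpa using (hasDerivAt_slice1_clm hF u).clm_apply (hasDerivAt_const p.1 v)

private lemma hasDerivAt_slice2_clm2
    {F : ℝ × ℝ → (ℝ × ℝ) →L[ℝ] ((ℝ × ℝ) →L[ℝ] ℝ)} {p : ℝ × ℝ}
    (hF : DifferentiableAt ℝ F p) (u v : ℝ × ℝ) :
    HasDerivAt (fun y => F (p.1, y) u v) (fderiv ℝ F p (0, 1) u v) p.2 := by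
  simpa using (hasDerivAt_slice2_clm hF u).clm_apply (hasDerivAt_const p.2 v)

private lemma fderiv_clm_apply_const {G : Type*} [NormedAddCommGroup G] [NormedSpace ℝ G]
    {F : ℝ × ℝ → (ℝ × ℝ) →L[ℝ] G} {p : ℝ × ℝ} (hF : DifferentiableAt ℝ F p) (v u : ℝ × ℝ) :
    fderiv ℝ (fun q => F q v) p u = fderiv ℝ F p u v := by
  rw [fderiv_clm_apply hF (differentiableAt_const v)]
  simp

/-- if Δh + k̃ = 0 and (D−1)k̃ = −k on {T > 0}, then w₁ = T⁻²(D−1)h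
solves the model Fuchsian equation L₀w₁ = k, L₀ = (D+2)(D−1) + T²∂²_Y. -/
theorem model_fuchsian_solution (h ktil k : ℝ × ℝ → ℝ)
    (hh : ContDiffOn ℝ 3 h {p : ℝ × ℝ | 0 < p.1})
    (hpoisson : ∀ p : ℝ × ℝ, 0 < p.1 → lap h p + ktil p = 0)
    (hktil : ∀ p : ℝ × ℝ, 0 < p.1 → p.1 * pdx ktil p - ktil p = -k p) :
    ∀ p : ℝ × ℝ, 0 < p.1 →
      Dop (fun q => Dop (fun r => (r.1 * pdx h r - h r) / r.1 ^ 2) q) p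
        + Dop (fun r => (r.1 * pdx h r - h r) / r.1 ^ 2) p
        - 2 * ((p.1 * pdx h p - h p) / p.1 ^ 2)
        + p.1 ^ 2 * pdy (pdy (fun r => (r.1 * pdx h r - h r) / r.1 ^ 2)) p
      = k p := by
  have hU : IsOpen {p : ℝ × ℝ | 0 < p.1} := isOpen_lt continuous_const continuous_fst
  set U : Set (ℝ × ℝ) := {p : ℝ × ℝ | 0 < p.1} with hUdef
  set w : ℝ × ℝ → ℝ := fun r => (r.1 * pdx h r - h r) / r.1 ^ 2 with hwdef
  set F1 : ℝ × ℝ → (ℝ × ℝ) →L[ℝ] ℝ := fun q => fderiv ℝ h q with hF1def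
  set F2 : ℝ × ℝ → (ℝ × ℝ) →L[ℝ] ((ℝ × ℝ) →L[ℝ] ℝ) := fun q => fderiv ℝ F1 q with hF2def
  set F3 : ℝ × ℝ → (ℝ × ℝ) →L[ℝ] ((ℝ × ℝ) →L[ℝ] ((ℝ × ℝ) →L[ℝ] ℝ)) :=
    fun q => fderiv ℝ F2 q with hF3def
  have hd : DifferentiableOn ℝ h U := hh.differentiableOn (by norm_num)
  have hF1c : ContDiffOn ℝ 2 F1 U := hh.fderiv_of_isOpen hU (by norm_num)
  have hF2c : ContDiffOn ℝ 1 F2 U := hF1c.fderiv_of_isOpen hU (by norm_num)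
  have dh : ∀ q ∈ U, DifferentiableAt ℝ h q :=
    fun q hq => (hd q hq).differentiableAt (hU.mem_nhds hq)
  have dF1 : ∀ q ∈ U, DifferentiableAt ℝ F1 q :=
    fun q hq => ((hF1c.differentiableOn (by norm_num)) q hq).differentiableAt (hU.mem_nhds hq)
  have dF2 : ∀ q ∈ U, DifferentiableAt ℝ F2 q :=
    fun q hq => ((hF2c.differentiableOn (by norm_num)) q hq).differentiableAt (hU.mem_nhds hq)
  -- fderiv identities
  have hdF1 : ∀ q, fderiv ℝ h q = F1 q := fun q => rfl
  have hdF2 : ∀ q, fderiv ℝ F1 q = F2 q := fun q => rfl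
  have hdF3 : ∀ q, fderiv ℝ F2 q = F3 q := fun q => rfl
  -- first partials of h on U
  have hpx : ∀ q ∈ U, pdx h q = F1 q (1, 0) := by
    intro q hq
    exact (hasDerivAt_slice1 (dh q hq)).deriv
  have hpy : ∀ q ∈ U, pdy h q = F1 q (0, 1) := by
    intro q hq
    exact (hasDerivAt_slice2 (dh q hq)).deriv
  -- horizontal eventual membership
  have hev1 : ∀ q ∈ U, ∀ᶠ x in nhds q.1, ((x : ℝ), q.2) ∈ U := by
    intro q hq
    filter_upwards [eventually_gt_nhds hq] with x hx using hx
  -- pdx w on U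
  have h_pdxw : ∀ q ∈ U, pdx w q
      = F2 q (1, 0) (1, 0) / q.1 - 2 * F1 q (1, 0) / q.1 ^ 2 + 2 * h q / q.1 ^ 3 := by
    intro q hq
    have hq1 : (0 : ℝ) < q.1 := hq
    have hA : HasDerivAt (fun x => F1 (x, q.2) (1, 0)) (F2 q (1, 0) (1, 0)) q.1 :=
      hasDerivAt_slice1_clm (dF1 q hq) _
    have hB : HasDerivAt (fun x => h (x, q.2)) (F1 q (1, 0)) q.1 :=
      hasDerivAt_slice1 (dh q hq)
    have hnum : HasDerivAt (fun x => x * F1 (x, q.2) (1, 0) - h (x, q.2))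
        (1 * F1 q (1, 0) + q.1 * F2 q (1, 0) (1, 0) - F1 q (1, 0)) q.1 := by
      exact ((hasDerivAt_id q.1).mul hA).sub hB
    have hden : HasDerivAt (fun x : ℝ => x ^ 2) (2 * q.1 ^ 1) q.1 := by
      simpa using hasDerivAt_pow 2 q.1
    have hv := hnum.div hden (by positivity)
    have heq : (fun x => w (x, q.2))
        =ᶠ[nhds q.1] (fun x => (x * F1 (x, q.2) (1, 0) - h (x, q.2)) / x ^ 2) := by
      filter_upwards [hev1 q hq] with x hx
      simp only [hwdef]
      rw [hpx _ hx]
    have := (hv.congr_of_eventuallyEq heq).deriv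
    rw [show ((q.1 : ℝ), q.2) = q from rfl] at this
    rw [pdx, this]
    set A : ℝ := F2 q (1, 0) (1, 0)
    set B : ℝ := F1 q (1, 0)
    set C : ℝ := h q
    field_simp
    ring
  -- Dop w on U
  have h_Dw : ∀ q ∈ U, Dop w q
      = F2 q (1, 0) (1, 0) - 2 * F1 q (1, 0) / q.1 + 2 * h q / q.1 ^ 2 := by
    intro q hq
    have hq1 : (0 : ℝ) < q.1 := hq
    rw [Dop, h_pdxw q hq]
    field_simp
  -- pdy w on U
  have h_pdyw : ∀ q ∈ U, pdy w q = F2 q (0, 1) (1, 0) / q.1 - F1 q (0, 1) / q.1 ^ 2 := by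
    intro q hq
    have hq1 : (0 : ℝ) < q.1 := hq
    have hA : HasDerivAt (fun y => F1 (q.1, y) (1, 0)) (F2 q (0, 1) (1, 0)) q.2 :=
      hasDerivAt_slice2_clm (dF1 q hq) _
    have hB : HasDerivAt (fun y => h (q.1, y)) (F1 q (0, 1)) q.2 :=
      hasDerivAt_slice2 (dh q hq)
    have hv : HasDerivAt (fun y => (q.1 * F1 (q.1, y) (1, 0) - h (q.1, y)) / q.1 ^ 2)
        ((q.1 * F2 q (0, 1) (1, 0) - F1 q (0, 1)) / q.1 ^ 2) q.2 :=
      ((hA.const_mul q.1).sub hB).div_const _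
    have heq : (fun y => w (q.1, y))
        =ᶠ[nhds q.2] (fun y => (q.1 * F1 (q.1, y) (1, 0) - h (q.1, y)) / q.1 ^ 2) := by
      apply Filter.Eventually.of_forall
      intro y
      simp only [hwdef]
      rw [hpx (q.1, y) hq1]
    have := (hv.congr_of_eventuallyEq heq).deriv
    rw [pdy, this]
    field_simp
  intro p hp
  have hpU : p ∈ U := hp
  -- pdx (Dop w) at p
  have h_pdxDw : pdx (fun q => Dop w q) p
      = F3 p (1, 0) (1, 0) (1, 0) - 2 * F2 p (1, 0) (1, 0) / p.1
        + 4 * F1 p (1, 0) / p.1 ^ 2 - 4 * h p / p.1 ^ 3 := by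
    have hA : HasDerivAt (fun x => F2 (x, p.2) (1, 0) (1, 0)) (F3 p (1, 0) (1, 0) (1, 0)) p.1 :=
      hasDerivAt_slice1_clm2 (dF2 p hpU) _ _
    have hB : HasDerivAt (fun x => F1 (x, p.2) (1, 0)) (F2 p (1, 0) (1, 0)) p.1 :=
      hasDerivAt_slice1_clm (dF1 p hpU) _
    have hC : HasDerivAt (fun x => h (x, p.2)) (F1 p (1, 0)) p.1 :=
      hasDerivAt_slice1 (dh p hpU)
    have hden1 : HasDerivAt (fun x : ℝ => x) 1 p.1 := hasDerivAt_id p.1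
    have hden2 : HasDerivAt (fun x : ℝ => x ^ 2) (2 * p.1 ^ 1) p.1 := by
      simpa using hasDerivAt_pow 2 p.1
    have hv := (hA.sub (((hB.const_mul 2).div hden1 (ne_of_gt hp)))).add
      ((hC.const_mul 2).div hden2 (by positivity))
    have heq : (fun x => (fun q => Dop w q) (x, p.2))
        =ᶠ[nhds p.1] (fun x => F2 (x, p.2) (1, 0) (1, 0)
          - 2 * F1 (x, p.2) (1, 0) / x + 2 * h (x, p.2) / x ^ 2) := by
      filter_upwards [hev1 p hpU] with x hx
      exact h_Dw (x, p.2) hx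
    have := (hv.congr_of_eventuallyEq heq).deriv
    rw [show ((p.1 : ℝ), p.2) = p from rfl] at this
    rw [pdx, this]
    have hp1 : (0 : ℝ) < p.1 := hp
    set A : ℝ := F3 p (1, 0) (1, 0) (1, 0)
    set A2 : ℝ := F2 p (1, 0) (1, 0)
    set B : ℝ := F1 p (1, 0)
    set C : ℝ := h p
    field_simp
    ring
  -- pdy (pdy w) at p
  have h_pdyyw : pdy (pdy w) p
      = F3 p (0, 1) (0, 1) (1, 0) / p.1 - F2 p (0, 1) (0, 1) / p.1 ^ 2 := by
    have hA : HasDerivAt (fun y => F2 (p.1, y) (0, 1) (1, 0)) (F3 p (0, 1) (0, 1) (1, 0)) p.2 :=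
      hasDerivAt_slice2_clm2 (dF2 p hpU) _ _
    have hB : HasDerivAt (fun y => F1 (p.1, y) (0, 1)) (F2 p (0, 1) (0, 1)) p.2 :=
      hasDerivAt_slice2_clm (dF1 p hpU) _
    have hv := (hA.div_const p.1).sub (hB.div_const (p.1 ^ 2))
    have heq : (fun y => pdy w (p.1, y))
        =ᶠ[nhds p.2] (fun y => F2 (p.1, y) (0, 1) (1, 0) / p.1
          - F1 (p.1, y) (0, 1) / p.1 ^ 2) := by
      apply Filter.Eventually.of_forall
      intro y
      exact h_pdyw (p.1, y) hp
    have := (hv.congr_of_eventuallyEq heq).deriv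
    rw [pdy, this]
  -- ktil on U
  have h_ktil : ∀ q ∈ U, ktil q = -(F2 q (1, 0) (1, 0) + F2 q (0, 1) (0, 1)) := by
    intro q hq
    have hq1 : (0 : ℝ) < q.1 := hq
    have h1 : pdx (pdx h) q = F2 q (1, 0) (1, 0) := by
      have hA : HasDerivAt (fun x => F1 (x, q.2) (1, 0)) (F2 q (1, 0) (1, 0)) q.1 :=
        hasDerivAt_slice1_clm (dF1 q hq) _
      have heq : (fun x => pdx h (x, q.2)) =ᶠ[nhds q.1] (fun x => F1 (x, q.2) (1, 0)) := by
        filter_upwards [hev1 q hq] with x hx using hpx _ hx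
      exact (hA.congr_of_eventuallyEq heq).deriv
    have h2 : pdy (pdy h) q = F2 q (0, 1) (0, 1) := by
      have hA : HasDerivAt (fun y => F1 (q.1, y) (0, 1)) (F2 q (0, 1) (0, 1)) q.2 :=
        hasDerivAt_slice2_clm (dF1 q hq) _
      have heq : (fun y => pdy h (q.1, y)) =ᶠ[nhds q.2] (fun y => F1 (q.1, y) (0, 1)) := by
        exact Filter.Eventually.of_forall fun y => hpy (q.1, y) hq1
      exact (hA.congr_of_eventuallyEq heq).deriv
    have := hpoisson q hq1
    rw [lap, h1, h2] at this
    linarith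
  -- pdx ktil at p
  have h_pdxktil : pdx ktil p = -(F3 p (1, 0) (1, 0) (1, 0) + F3 p (1, 0) (0, 1) (0, 1)) := by
    have hA : HasDerivAt (fun x => F2 (x, p.2) (1, 0) (1, 0)) (F3 p (1, 0) (1, 0) (1, 0)) p.1 :=
      hasDerivAt_slice1_clm2 (dF2 p hpU) _ _
    have hB : HasDerivAt (fun x => F2 (x, p.2) (0, 1) (0, 1)) (F3 p (1, 0) (0, 1) (0, 1)) p.1 :=
      hasDerivAt_slice1_clm2 (dF2 p hpU) _ _
    have hv := (hA.add hB).neg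
    have heq : (fun x => ktil (x, p.2))
        =ᶠ[nhds p.1] (fun x => -(F2 (x, p.2) (1, 0) (1, 0) + F2 (x, p.2) (0, 1) (0, 1))) := by
      filter_upwards [hev1 p hpU] with x hx using h_ktil _ hx
    exact (hv.congr_of_eventuallyEq heq).deriv
  -- symmetry of second derivative on U
  have hsymF2 : ∀ q ∈ U, ∀ u v : ℝ × ℝ, F2 q u v = F2 q v u := by
    intro q hq u v
    have hev : ∀ᶠ r in nhds q, HasFDerivAt h (F1 r) r := by
      filter_upwards [hU.mem_nhds hq] with r hr using (dh r hr).hasFDerivAt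
    exact second_derivative_symmetric_of_eventually hev (dF1 q hq).hasFDerivAt u v
  -- symmetry of F3 in first two arguments
  have hsymF3 : ∀ u v : ℝ × ℝ, F3 p u v = F3 p v u := by
    intro u v
    have hev : ∀ᶠ r in nhds p, HasFDerivAt F1 (F2 r) r := by
      filter_upwards [hU.mem_nhds hpU] with r hr using (dF1 r hr).hasFDerivAt
    exact second_derivative_symmetric_of_eventually hev (dF2 p hpU).hasFDerivAt u v
  -- fderiv of q ↦ F2 q a b
  have hF2ab : ∀ a b u : ℝ × ℝ, fderiv ℝ (fun q => F2 q a b) p u = F3 p u a b := by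
    intro a b u
    rw [fderiv_clm_apply_const ((dF2 p hpU).clm_apply (differentiableAt_const a)) b u,
      fderiv_clm_apply_const (dF2 p hpU) a u]
  -- the key third-derivative commutation
  have hkey : F3 p (0, 1) (0, 1) (1, 0) = F3 p (1, 0) (0, 1) (0, 1) := by
    have heq : (fun q => F2 q (0, 1) (1, 0)) =ᶠ[nhds p] (fun q => F2 q (1, 0) (0, 1)) := by
      filter_upwards [hU.mem_nhds hpU] with q hq using hsymF2 q hq _ _
    have h1 : fderiv ℝ (fun q => F2 q (0, 1) (1, 0)) p
        = fderiv ℝ (fun q => F2 q (1, 0) (0, 1)) p := heq.fderiv_eq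
    have h2 : fderiv ℝ (fun q => F2 q (0, 1) (1, 0)) p (0, 1)
        = fderiv ℝ (fun q => F2 q (1, 0) (0, 1)) p (0, 1) := by rw [h1]
    rw [hF2ab, hF2ab] at h2
    rw [h2]
    have := hsymF3 (0, 1) (1, 0)
    rw [this]
  -- final assembly
  have hk : k p = ktil p - p.1 * pdx ktil p := by
    have := hktil p hp
    linarith
  have hgoal1 : Dop (fun q => Dop w q) p = p.1 * pdx (fun q => Dop w q) p := rfl
  rw [hgoal1, h_pdxDw, h_Dw p hpU, h_pdyyw, hk, h_ktil p hpU, h_pdxktil, hpx p hpU, hkey]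
  have hp1 : (0 : ℝ) < p.1 := hp
  set A : ℝ := F3 p (1, 0) (1, 0) (1, 0)
  set A2 : ℝ := F3 p (1, 0) (0, 1) (0, 1)
  set B : ℝ := F2 p (1, 0) (1, 0)
  set B2 : ℝ := F2 p (0, 1) (0, 1)
  set C : ℝ := F1 p (1, 0)
  set Hh : ℝ := h p
  field_simp
  ring
end
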